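/- Let x* ∈ ℝ^E with x* ≥ 0 satisfy all rank inequalities x*(F) ≤ r(F) for nonempty F ⊆ E as well as the cardinality bounds c_1 ≤ x*(E) ≤ c_m. If x*(E) = c_q for some q ∈ {1, …, m}, then x* satisfies every rank induced forbidden set inequality, and hence x* ∈ P^c(E). -/

import Mathlib

open Finset

/-- A (loopless) matroid on a finite ground set, given by its independent sets. -/
structure FinMatroid (α : Type*) [Fintype α] [DecidableEq α] where
  Indep : Finset α → Prop
  empty_indep : Indep ∅
  subset_indep : ∀ ⦃I J : Finset α⦄, Indep J → I ⊆ J → Indep I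
  exchange : ∀ ⦃I J : Finset α⦄, Indep I → Indep J → I.card < J.card →
    ∃ e ∈ J \ I, Indep (insert e I)
  loopless : ∀ e : α, Indep {e}

variable {α : Type*} [Fintype α] [DecidableEq α]

open Classical in
/-- The rank of a set: the maximum cardinality of an independent subset. -/
noncomputable def FinMatroid.r (M : FinMatroid α) (F : Finset α) : ℕ :=
  (F.powerset.filter M.Indep).sup Finset.card

/-- incidence vector -/
noncomputable def incVec (I : Finset α) : α → ℝ := fun e => if e ∈ I then 1 else 0

/-- x(S) = ∑_{e ∈ S} x_e -/
noncomputable def fsum (x : α → ℝ) (S : Finset α) : ℝ := ∑ e ∈ S, x e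

/-- closed set -/
def FinMatroid.ClosedSet (M : FinMatroid α) (F : Finset α) : Prop :=
  ∀ e ∉ F, M.r F < M.r (insert e F)

/-- F is separable -/
def FinMatroid.Separable (M : FinMatroid α) (F : Finset α) : Prop :=
  ∃ F₁ F₂ : Finset α, F₁ ≠ ∅ ∧ F₂ ≠ ∅ ∧ Disjoint F₁ F₂ ∧ F₁ ∪ F₂ = F ∧
    M.r F₁ + M.r F₂ ≤ M.r F

def FinMatroid.Inseparable (M : FinMatroid α) (F : Finset α) : Prop :=
  ¬ M.Separable F

/-- the k-rank r^k(F) = k - r(E \ F), as an integer -/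
noncomputable def FinMatroid.krank (M : FinMatroid α) (k : ℕ) (F : Finset α) : ℤ :=
  (k : ℤ) - (M.r Fᶜ : ℤ)

/-- F is k-separable -/
noncomputable def FinMatroid.kSeparable (M : FinMatroid α) (k : ℕ) (F : Finset α) : Prop :=
  ∃ F₁ F₂ : Finset α, F₁ ≠ ∅ ∧ F₂ ≠ ∅ ∧ Disjoint F₁ F₂ ∧ F₁ ∪ F₂ = F ∧
    M.krank k F₁ + M.krank k F₂ = M.krank k F

noncomputable def FinMatroid.kInseparable (M : FinMatroid α) (k : ℕ) (F : Finset α) : Prop :=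
  ¬ M.kSeparable k F

/-- convex hull of incidence vectors of independent sets of cardinality exactly k -/
noncomputable def exactPolytope (M : FinMatroid α) (k : ℕ) : Set (α → ℝ) :=
  convexHull ℝ {x | ∃ I : Finset α, M.Indep I ∧ I.card = k ∧ x = incVec I}

/-- the cardinality constrained matroid polytope P^c(E) -/
noncomputable def cardPolytope (M : FinMatroid α) {m : ℕ} (c : Fin m → ℕ) : Set (α → ℝ) :=
  convexHull ℝ {x | ∃ I : Finset α, M.Indep I ∧ (∃ p : Fin m, I.card = c p) ∧ x = incVec I}

/-- dimension of (the affine hull of) a subset of ℝ^E -/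
noncomputable def polyDim (s : Set (α → ℝ)) : ℕ :=
  Module.finrank ℝ (affineSpan ℝ s).direction

/-- `a · x ≤ a₀` defines a facet of `P` -/
noncomputable def IsFacet (P : Set (α → ℝ)) (a : α → ℝ) (a₀ : ℝ) : Prop :=
  (∀ x ∈ P, ∑ e, a e * x e ≤ a₀) ∧
  polyDim {x ∈ P | ∑ e, a e * x e = a₀} + 1 = polyDim P


namespace FinMatroid
variable (M : FinMatroid α)

open Classical in
lemma card_le_r {I F : Finset α} (hI : M.Indep I) (hIF : I ⊆ F) : I.card ≤ M.r F := by
  classical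
  refine Finset.le_sup (f := Finset.card) ?_
  simp only [Finset.mem_filter, Finset.mem_powerset]
  exact ⟨hIF, hI⟩

open Classical in
lemma exists_basis (F : Finset α) : ∃ I, I ⊆ F ∧ M.Indep I ∧ I.card = M.r F := by
  classical
  have hne : (F.powerset.filter M.Indep).Nonempty :=
    ⟨∅, by simp [M.empty_indep]⟩
  obtain ⟨I, hI, hEq⟩ := Finset.exists_mem_eq_sup _ hne Finset.card
  simp only [Finset.mem_filter, Finset.mem_powerset] at hI
  exact ⟨I, hI.1, hI.2, hEq.symm⟩

lemma r_le_card (F : Finset α) : M.r F ≤ F.card := by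
  classical
  refine Finset.sup_le fun I hI => ?_
  simp only [Finset.mem_filter, Finset.mem_powerset] at hI
  exact Finset.card_le_card hI.1

lemma r_mono {F G : Finset α} (h : F ⊆ G) : M.r F ≤ M.r G := by
  obtain ⟨I, hIF, hInd, hc⟩ := M.exists_basis F
  exact hc ▸ M.card_le_r hInd (hIF.trans h)

lemma r_singleton (e : α) : M.r {e} = 1 := by
  refine le_antisymm (by simpa using M.r_le_card {e}) ?_
  simpa using M.card_le_r (M.loopless e) (Finset.Subset.refl {e})

lemma indep_of_r_eq_card {F : Finset α} (h : M.r F = F.card) : M.Indep F := by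
  obtain ⟨I, hIF, hInd, hc⟩ := M.exists_basis F
  have : I = F := Finset.eq_of_subset_of_card_le hIF (by omega)
  exact this ▸ hInd

lemma exists_basis_superset {I F : Finset α} (hI : M.Indep I) (hIF : I ⊆ F) :
    ∃ J, I ⊆ J ∧ J ⊆ F ∧ M.Indep J ∧ J.card = M.r F := by
  by_cases h : I.card = M.r F
  · exact ⟨I, Finset.Subset.refl I, hIF, hI, h⟩
  · have hlt : I.card < M.r F := lt_of_le_of_ne (M.card_le_r hI hIF) h
    obtain ⟨B, hBF, hBind, hBcard⟩ := M.exists_basis F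
    obtain ⟨e, he, hins⟩ := M.exchange hI hBind (by omega)
    have heB : e ∈ B := (Finset.mem_sdiff.mp he).1
    have heI : e ∉ I := (Finset.mem_sdiff.mp he).2
    obtain ⟨J, h1, h2, h3, h4⟩ :=
      exists_basis_superset hins (Finset.insert_subset (hBF heB) hIF)
    exact ⟨J, (Finset.subset_insert _ _).trans h1, h2, h3, h4⟩
termination_by M.r F - I.card
decreasing_by
  have h5 := M.card_le_r hins (Finset.insert_subset (hBF heB) hIF)
  have h6 : (insert e I).card = I.card + 1 := Finset.card_insert_of_notMem heI
  omega

lemma submodular (A B : Finset α) : M.r (A ∪ B) + M.r (A ∩ B) ≤ M.r A + M.r B := by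
  obtain ⟨I, hIsub, hIind, hIcard⟩ := M.exists_basis (A ∩ B)
  obtain ⟨J, hIJ, hJsub, hJind, hJcard⟩ :=
    M.exists_basis_superset hIind (hIsub.trans (Finset.inter_subset_left.trans Finset.subset_union_left))
  have hA : (J ∩ A).card ≤ M.r A :=
    M.card_le_r (M.subset_indep hJind Finset.inter_subset_left) Finset.inter_subset_right
  have hB : (J ∩ B).card ≤ M.r B :=
    M.card_le_r (M.subset_indep hJind Finset.inter_subset_left) Finset.inter_subset_right
  have hJU : J ∩ (A ∪ B) = J := Finset.inter_eq_left.mpr hJsub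
  have hkey : (J ∩ A).card + (J ∩ B).card = J.card + (J ∩ (A ∩ B)).card := by
    have h1 : (J ∩ A) ∪ (J ∩ B) = J := by rw [← Finset.inter_union_distrib_left, hJU]
    have h2 : (J ∩ A) ∩ (J ∩ B) = J ∩ (A ∩ B) := by
      ext a; simp [Finset.mem_inter]; tauto
    have := Finset.card_union_add_card_inter (J ∩ A) (J ∩ B)
    rw [h1, h2] at this
    omega
  have hIJ' : I ⊆ J ∩ (A ∩ B) := fun a ha => Finset.mem_inter.mpr ⟨hIJ ha, hIsub ha⟩
  have := Finset.card_le_card hIJ'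
  omega

lemma r_empty : M.r ∅ = 0 := by
  have := M.r_le_card ∅; simpa using this

end FinMatroid

lemma integral_sum_aux (y : α → ℝ) (S : Finset α) (hS : ∃ z : ℤ, (z : ℝ) = fsum y S)
    (e : α) (he : e ∈ S) (hef : ¬ ∃ z : ℤ, (z : ℝ) = y e) :
    ∃ f ∈ S, f ≠ e ∧ ¬ ∃ z : ℤ, (z : ℝ) = y f := by
  by_contra hcon
  push_neg at hcon
  have hrest : ∃ z : ℤ, (z : ℝ) = fsum y (S.erase e) := by
    refine Finset.sum_induction y (fun r => ∃ z : ℤ, (z : ℝ) = r) ?_ ⟨0, by simp⟩ ?_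
    · rintro a b ⟨za, ha⟩ ⟨zb, hb⟩; exact ⟨za + zb, by push_cast; rw [ha, hb]⟩
    · intro f hf
      exact hcon f (Finset.mem_of_mem_erase hf) (Finset.ne_of_mem_erase hf)
  obtain ⟨z1, hz1⟩ := hrest
  obtain ⟨z2, hz2⟩ := hS
  have hsplit : fsum y S = y e + fsum y (S.erase e) := (Finset.add_sum_erase S y he).symm
  exact hef ⟨z2 - z1, by push_cast; rw [hz1, hz2, hsplit]; ring⟩

lemma mem_exact_hull (M : FinMatroid α) (k : ℕ) (x : α → ℝ)
    (hnn : ∀ e, 0 ≤ x e) (hr : ∀ F : Finset α, fsum x F ≤ (M.r F : ℝ))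
    (hsum : fsum x Finset.univ = (k : ℝ)) :
    x ∈ convexHull ℝ {y : α → ℝ | ∃ I : Finset α, M.Indep I ∧ I.card = k ∧ y = incVec I} := by
  classical
  set V : Set (α → ℝ) := {y | ∃ I : Finset α, M.Indep I ∧ I.card = k ∧ y = incVec I} with hV
  set P : Set (α → ℝ) :=
    {y | (∀ e, 0 ≤ y e) ∧ (∀ F : Finset α, fsum y F ≤ (M.r F : ℝ)) ∧ fsum y univ = (k : ℝ)}
    with hP
  have hxP : x ∈ P := ⟨hnn, hr, hsum⟩
  have hub : ∀ y ∈ P, ∀ e, y e ≤ 1 := by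
    intro y hy e
    have h := hy.2.1 {e}
    rw [M.r_singleton] at h
    simpa [fsum] using h
  have hfsum_lin : ∀ (a b : ℝ) (y z : α → ℝ) (F : Finset α),
      fsum (a • y + b • z) F = a * fsum y F + b * fsum z F := by
    intro a b y z F
    simp [fsum, Finset.sum_add_distrib, Finset.mul_sum]
  have hPconv : Convex ℝ P := by
    rintro y hy z hz a b ha hb hab
    refine ⟨?_, ?_, ?_⟩
    · intro e
      have : (a • y + b • z) e = a * y e + b * z e := rfl
      rw [this]
      have := hy.1 e; have := hz.1 e
      positivity
    · intro F
      rw [hfsum_lin]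
      calc a * fsum y F + b * fsum z F ≤ a * (M.r F : ℝ) + b * (M.r F : ℝ) := by
            have h1 := hy.2.1 F; have h2 := hz.2.1 F
            have := mul_le_mul_of_nonneg_left h1 ha
            have := mul_le_mul_of_nonneg_left h2 hb
            linarith
        _ = (M.r F : ℝ) := by rw [← add_mul, hab, one_mul]
    · rw [hfsum_lin, hy.2.2, hz.2.2, ← add_mul, hab, one_mul]
  have hcont : ∀ F : Finset α, Continuous fun y : α → ℝ => fsum y F := fun F =>
    continuous_finset_sum F fun e _ => continuous_apply e
  have hPclosed : IsClosed P := by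
    have hPeq : P = (⋂ e : α, {y : α → ℝ | 0 ≤ y e}) ∩
        ((⋂ F : Finset α, {y : α → ℝ | fsum y F ≤ (M.r F : ℝ)}) ∩
          {y : α → ℝ | fsum y univ = (k : ℝ)}) := by
      ext y
      simp only [hP, Set.mem_setOf_eq, Set.mem_inter_iff, Set.mem_iInter]
      try tauto
    rw [hPeq]
    exact IsClosed.inter (isClosed_iInter fun e => isClosed_le continuous_const (continuous_apply e))
      (IsClosed.inter (isClosed_iInter fun F => isClosed_le (hcont F) continuous_const)
        (isClosed_eq (hcont univ) continuous_const))
  have hPcomp : IsCompact P := by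
    refine IsCompact.of_isClosed_subset
      (isCompact_univ_pi fun _ : α => isCompact_Icc (a := (0 : ℝ)) (b := 1)) hPclosed ?_
    intro y hy
    rw [Set.mem_univ_pi]
    exact fun e => ⟨hy.1 e, hub y hy e⟩
  have hext : P.extremePoints ℝ ⊆ V := by
    intro y hyext
    rw [mem_extremePoints] at hyext
    obtain ⟨hyP, hyextr⟩ := hyext
    have h01 : ∀ e, y e = 0 ∨ y e = 1 := by
      by_contra hcontra
      push_neg at hcontra
      obtain ⟨g, hg0, hg1⟩ := hcontra
      set Tight : Finset α → Prop := fun F => fsum y F = (M.r F : ℝ) ∨ F = univ with hT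
      have htuniv : Tight univ := Or.inr rfl
      have htinter : ∀ F G, Tight F → Tight G → Tight (F ∩ G) := by
        intro F G hF hG
        rcases hG with hG | rfl
        · rcases hF with hF | rfl
          · left
            have hsub := M.submodular F G
            have h1 := hyP.2.1 (F ∩ G)
            have h2 := hyP.2.1 (F ∪ G)
            have h3 : fsum y (F ∪ G) + fsum y (F ∩ G) = fsum y F + fsum y G :=
              Finset.sum_union_inter
            have hcast : ((M.r (F ∪ G) : ℝ) + (M.r (F ∩ G) : ℝ)) ≤ (M.r F : ℝ) + (M.r G : ℝ) := by
              exact_mod_cast hsub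
            linarith
          · have huG : univ ∩ G = G := Finset.univ_inter G
            rw [huG]; exact Or.inl hG
        · rw [Finset.inter_univ]; exact hF
      have htint : ∀ T, Tight T → ∃ z : ℤ, (z : ℝ) = fsum y T := by
        intro T hT
        rcases hT with hT | rfl
        · exact ⟨(M.r T : ℤ), by rw [hT]; push_cast; ring⟩
        · exact ⟨(k : ℤ), by rw [hyP.2.2]; push_cast; ring⟩
      have hfrac_bounds : ∀ a : α, (¬ ∃ z : ℤ, (z : ℝ) = y a) → 0 < y a ∧ y a < 1 := by
        intro a ha
        constructor
        · rcases eq_or_lt_of_le (hyP.1 a) with h | h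
          · exact absurd ⟨0, by simp [← h]⟩ ha
          · exact h
        · rcases eq_or_lt_of_le (hub y hyP a) with h | h
          · exact absurd ⟨1, by simp [h]⟩ ha
          · exact h
      have hgfrac : ¬ ∃ z : ℤ, (z : ℝ) = y g := by
        rintro ⟨z, hz⟩
        have h0 : (0:ℝ) < z := by
          rw [hz]; exact lt_of_le_of_ne (hyP.1 g) (Ne.symm hg0)
        have h1 : (z:ℝ) < 1 := by
          rw [hz]; exact lt_of_le_of_ne (hub y hyP g) hg1
        have : (0:ℤ) < z := by exact_mod_cast h0
        have : z < 1 := by exact_mod_cast h1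
        omega
      set Frac : α → Prop := fun a => ¬ ∃ z : ℤ, (z : ℝ) = y a with hFr
      set 𝒟 : Finset (Finset α) :=
        (univ : Finset α).powerset.filter (fun T => Tight T ∧ ∃ e ∈ T, Frac e) with h𝒟
      have h𝒟ne : 𝒟.Nonempty := ⟨univ, by
        simp only [h𝒟, Finset.mem_filter, Finset.mem_powerset]
        exact ⟨Finset.Subset.refl _, htuniv, g, Finset.mem_univ g, hgfrac⟩⟩
      obtain ⟨T₀, hT₀mem, hT₀min⟩ := Finset.exists_min_image 𝒟 Finset.card h𝒟ne
      rw [h𝒟, Finset.mem_filter, Finset.mem_powerset] at hT₀mem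
      obtain ⟨-, hT₀t, e₀, he₀T, he₀frac⟩ := hT₀mem
      have hkey : ∀ a, a ∈ T₀ → Frac a → ∀ G, Tight G → a ∈ G → T₀ ⊆ G := by
        intro a haT hafrac G hG haG
        have ht' : Tight (T₀ ∩ G) := htinter _ _ hT₀t hG
        have hmem' : T₀ ∩ G ∈ 𝒟 := by
          rw [h𝒟, Finset.mem_filter, Finset.mem_powerset]
          exact ⟨(Finset.inter_subset_left).trans (Finset.subset_univ T₀), ht',
            a, Finset.mem_inter.mpr ⟨haT, haG⟩, hafrac⟩
        have hcard := hT₀min _ hmem'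
        have heq : T₀ ∩ G = T₀ :=
          Finset.eq_of_subset_of_card_le Finset.inter_subset_left hcard
        intro b hb
        have : b ∈ T₀ ∩ G := heq.symm ▸ hb
        exact (Finset.mem_inter.mp this).2
      obtain ⟨f, hfT, hfe, hffrac⟩ :=
        integral_sum_aux y T₀ (htint T₀ hT₀t) e₀ he₀T he₀frac
      have hiff : ∀ G, Tight G → (e₀ ∈ G ↔ f ∈ G) := by
        intro G hG
        constructor
        · intro h; exact hkey e₀ he₀T he₀frac G hG h hfT
        · intro h; exact hkey f hfT hffrac G hG h he₀T
      -- epsilon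
      set NT : Finset (Finset α) := (univ : Finset α).powerset.filter (fun F => ¬ Tight F) with hNT
      set s : Finset ℝ :=
        insert (y e₀) (insert (y f) (NT.image (fun F => (M.r F : ℝ) - fsum y F))) with hs
      have hsne : s.Nonempty := ⟨y e₀, by simp [hs]⟩
      set ε := s.min' hsne with hε
      have he₀pos := hfrac_bounds e₀ he₀frac
      have hfpos := hfrac_bounds f hffrac
      have hεpos : 0 < ε := by
        rw [hε, Finset.lt_min'_iff]
        intro b hb
        rw [hs] at hb
        simp only [Finset.mem_insert, Finset.mem_image] at hb
        rcases hb with rfl | rfl | ⟨F, hF, rfl⟩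
        · exact he₀pos.1
        · exact hfpos.1
        · rw [hNT, Finset.mem_filter] at hF
          have h1 := hyP.2.1 F
          have h2 : fsum y F ≠ (M.r F : ℝ) := fun h => hF.2 (Or.inl h)
          have : fsum y F < (M.r F : ℝ) := lt_of_le_of_ne h1 h2
          linarith
      have hεe₀ : ε ≤ y e₀ := Finset.min'_le _ _ (by simp [hs])
      have hεf : ε ≤ y f := Finset.min'_le _ _ (by simp [hs])
      have hslack : ∀ F : Finset α, ¬ Tight F → ε ≤ (M.r F : ℝ) - fsum y F := by
        intro F hF
        refine Finset.min'_le _ _ ?_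
        rw [hs]
        simp only [Finset.mem_insert, Finset.mem_image]
        refine Or.inr (Or.inr ⟨F, ?_, rfl⟩)
        rw [hNT, Finset.mem_filter]
        exact ⟨Finset.mem_powerset.mpr (Finset.subset_univ F), hF⟩
      set d : α → ℝ := fun a => (if a = e₀ then 1 else 0) + (if a = f then -1 else 0) with hd
      have hde₀ : d e₀ = 1 := by
        have hne : ¬ e₀ = f := fun h => hfe h.symm
        simp [hd, hne]
      have hdf : d f = -1 := by simp [hd, hfe]
      have hdother : ∀ a, a ≠ e₀ → a ≠ f → d a = 0 := by
        intro a h1 h2; simp [hd, h1, h2]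
      have hsumd : ∀ F : Finset α,
          fsum d F = (if e₀ ∈ F then (1:ℝ) else 0) + (if f ∈ F then (-1:ℝ) else 0) := by
        intro F
        rw [fsum, hd]
        rw [Finset.sum_add_distrib]
        congr 1
        · rw [Finset.sum_ite_eq' F e₀ (fun _ => (1:ℝ))]
        · rw [Finset.sum_ite_eq' F f (fun _ => (-1:ℝ))]
      have hdtight : ∀ F, Tight F → fsum d F = 0 := by
        intro F hF
        rw [hsumd]
        by_cases he : e₀ ∈ F
        · simp [he, (hiff F hF).mp he]
        · have hf' : f ∉ F := fun h => he ((hiff F hF).mpr h)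
          simp [he, hf']
      have hdbound : ∀ F : Finset α, fsum d F ≤ 1 ∧ -1 ≤ fsum d F := by
        intro F; rw [hsumd]; constructor <;> (split_ifs <;> norm_num)
      have hmemP : ∀ σ : ℝ, σ = 1 ∨ σ = -1 → (fun a => y a + σ * ε * d a) ∈ P := by
        intro σ hσ
        have hσabs : σ = 1 ∨ σ = -1 := hσ
        refine ⟨?_, ?_, ?_⟩
        · intro a
          show 0 ≤ y a + σ * ε * d a
          by_cases h1 : a = e₀
          · subst h1
            rw [hde₀]
            rcases hσabs with rfl | rfl
            · nlinarith [he₀pos.1, hεpos]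
            · nlinarith [hεe₀]
          · by_cases h2 : a = f
            · subst h2
              rw [hdf]
              rcases hσabs with rfl | rfl
              · nlinarith [hεf]
              · nlinarith [hfpos.1, hεpos]
            · rw [hdother a h1 h2]
              simpa using hyP.1 a
        · intro F
          have hexp : fsum (fun a => y a + σ * ε * d a) F = fsum y F + σ * ε * fsum d F := by
            rw [fsum, fsum, fsum, Finset.sum_add_distrib, Finset.mul_sum]
          rw [hexp]
          by_cases hF : Tight F
          · rw [hdtight F hF, mul_zero, add_zero]
            exact hyP.2.1 F
          · have hsl := hslack F hF
            have hb := hdbound F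
            have : σ * ε * fsum d F ≤ ε := by
              rcases hσabs with rfl | rfl
              · nlinarith [hεpos]
              · nlinarith [hεpos]
            linarith
        · have hexp : fsum (fun a => y a + σ * ε * d a) univ
              = fsum y univ + σ * ε * fsum d univ := by
            rw [fsum, fsum, fsum, Finset.sum_add_distrib, Finset.mul_sum]
          rw [hexp, hdtight univ htuniv, mul_zero, add_zero]
          exact hyP.2.2
      have h1 := hmemP 1 (Or.inl rfl)
      have h2 := hmemP (-1) (Or.inr rfl)
      have hseg : y ∈ openSegment ℝ (fun a => y a + 1 * ε * d a) (fun a => y a + (-1) * ε * d a) := by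
        refine ⟨1/2, 1/2, by norm_num, by norm_num, by norm_num, ?_⟩
        funext a
        simp only [Pi.add_apply, Pi.smul_apply, smul_eq_mul]
        ring
      obtain ⟨hcontr, -⟩ := hyextr _ h1 _ h2 hseg
      have := congrFun hcontr e₀
      rw [hde₀] at this
      simp at this
      exact absurd this (ne_of_gt hεpos)
    -- y is integral: build I
    set I : Finset α := univ.filter (fun e => y e = 1) with hI
    have hyI : y = incVec I := by
      funext a
      rw [incVec]
      by_cases h : a ∈ I
      · rw [if_pos h]
        rw [hI, Finset.mem_filter] at h
        exact h.2
      · rw [if_neg h]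
        rw [hI, Finset.mem_filter] at h
        rcases h01 a with h0 | h0
        · exact h0
        · exact absurd ⟨Finset.mem_univ a, h0⟩ h
    have hcards : ∀ S : Finset α, fsum y S = ((S ∩ I).card : ℝ) := by
      intro S
      rw [hyI, fsum]
      rw [show (∑ e ∈ S, incVec I e) = ∑ e ∈ S, (if e ∈ I then (1:ℝ) else 0) from rfl]
      rw [Finset.sum_ite_mem]
      simp
    have hIk : I.card = k := by
      have := hcards univ
      rw [hyP.2.2, Finset.univ_inter] at this
      exact_mod_cast this.symm
    have hIind : M.Indep I := by
      have h1 := hyP.2.1 I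
      rw [hcards I, Finset.inter_self] at h1
      have h2 : I.card ≤ M.r I := by exact_mod_cast h1
      have h3 := M.r_le_card I
      exact M.indep_of_r_eq_card (by omega)
    exact ⟨I, hIind, hIk, hyI⟩
  have hVfin : V.Finite := by
    have hsub : V ⊆ incVec '' (Set.univ : Set (Finset α)) := by
      rintro z ⟨I, -, -, rfl⟩; exact ⟨I, trivial, rfl⟩
    exact Set.Finite.subset (Set.finite_univ.image _) hsub
  have hKM := closure_convexHull_extremePoints hPcomp hPconv
  have hPsub : P ⊆ convexHull ℝ V := by
    rw [← hKM]
    refine (closure_mono (convexHull_mono hext)).trans ?_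
    rw [(hVfin.isClosed_convexHull ℝ).closure_eq]
  exact hPsub hxP


/-- if x* satisfies the rank inequalities, the cardinality
bounds, and x*(E) = c_q, then x* satisfies all forbidden set inequalities and
lies in P^c(E). -/
theorem feasible_cardinality_in_polytope {α : Type*} [Fintype α] [DecidableEq α]
    (M : FinMatroid α)
    {m : ℕ} (c : Fin m → ℕ) (hm : 2 ≤ m) (hmono : StrictMono c)
    (hlast : c ⟨m - 1, by omega⟩ ≤ M.r Finset.univ)
    (x : α → ℝ) (hnn : ∀ e : α, 0 ≤ x e)
    (hrank : ∀ F : Finset α, F ≠ ∅ → fsum x F ≤ (M.r F : ℝ))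
    (hlo : (c ⟨0, by omega⟩ : ℝ) ≤ fsum x Finset.univ)
    (hhi : fsum x Finset.univ ≤ (c ⟨m - 1, by omega⟩ : ℝ))
    (q : Fin m) (hq : fsum x Finset.univ = (c q : ℝ)) :
    (∀ (F : Finset α) (p : Fin m) (hp : p.val + 1 < m),
      c p < M.r F → M.r F < c ⟨p.val + 1, hp⟩ → ((c ⟨p.val + 1, hp⟩ : ℝ) - M.r F) * fsum x F - ((M.r F : ℝ) - c p) * fsum x Fᶜ ≤ (c p : ℝ) * ((c ⟨p.val + 1, hp⟩ : ℝ) - M.r F)) ∧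
    x ∈ cardPolytope M c := by
  classical
  constructor
  · intro F p hp h1 h2
    have hFne : F ≠ ∅ := by
      rintro rfl
      rw [M.r_empty] at h1
      omega
    have hc0r : ((c p : ℕ) : ℝ) < ((M.r F : ℕ) : ℝ) := by exact_mod_cast h1
    have hrc1 : ((M.r F : ℕ) : ℝ) < ((c ⟨p.val + 1, hp⟩ : ℕ) : ℝ) := by exact_mod_cast h2
    have hA_le_r : fsum x F ≤ ((M.r F : ℕ) : ℝ) := hrank F hFne
    have hBnn : (0:ℝ) ≤ fsum x Fᶜ := Finset.sum_nonneg fun e _ => hnn e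
    have hAB : fsum x F + fsum x Fᶜ = ((c q : ℕ) : ℝ) := by
      rw [← hq]; exact Finset.sum_add_sum_compl F x
    rcases le_or_gt q.val p.val with hqp | hqp
    · have hcq_le : ((c q : ℕ) : ℝ) ≤ ((c p : ℕ) : ℝ) := by
        exact_mod_cast hmono.monotone (show q ≤ p from hqp)
      nlinarith [mul_nonneg (sub_nonneg.mpr (le_of_lt hrc1))
          (sub_nonneg.mpr (by linarith : fsum x F ≤ ((c q : ℕ) : ℝ))),
        mul_nonneg (sub_nonneg.mpr (le_of_lt hc0r)) hBnn,
        mul_nonneg (sub_nonneg.mpr hcq_le) (sub_nonneg.mpr (le_of_lt hrc1))]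
    · have hcq_ge : ((c ⟨p.val + 1, hp⟩ : ℕ) : ℝ) ≤ ((c q : ℕ) : ℝ) := by
        exact_mod_cast hmono.monotone (show (⟨p.val + 1, hp⟩ : Fin m) ≤ q from hqp)
      nlinarith [mul_nonneg (sub_nonneg.mpr (le_of_lt (hc0r.trans hrc1)))
          (sub_nonneg.mpr hA_le_r),
        mul_nonneg (sub_nonneg.mpr (le_of_lt hc0r)) (sub_nonneg.mpr hcq_ge)]
  · have hr' : ∀ F : Finset α, fsum x F ≤ ((M.r F : ℕ) : ℝ) := by
      intro F
      rcases eq_or_ne F ∅ with rfl | h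
      · have : fsum x ∅ = 0 := Finset.sum_empty
        rw [this]
        exact Nat.cast_nonneg _
      · exact hrank F h
    have hmem := mem_exact_hull M (c q) x hnn hr' hq
    have hsub : {y : α → ℝ | ∃ I : Finset α, M.Indep I ∧ I.card = c q ∧ y = incVec I} ⊆
        {y : α → ℝ | ∃ I : Finset α, M.Indep I ∧ (∃ p : Fin m, I.card = c p) ∧ y = incVec I} := by
      rintro z ⟨I, hI, hc, rfl⟩
      exact ⟨I, hI, ⟨q, hc⟩, rfl⟩
    exact convexHull_mono hsub hmem
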